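/- If 𝒢 is an isomorphism-closed class of finite simple graphs that is closed under taking minors and closed under path-addition, and 𝒢 contains a graph with at least two vertices, then 𝒢 contains every finite simple graph. (Equivalently, a minor-closed class closed under path-addition is trivial: it is empty, consists only of vertexless/single-vertex edgeless graphs, or is the class of all finite simple graphs.) -/

import Mathlib

/-- Points of the plane `ℝ²`. -/
abbrev Plane : Type := ℝ × ℝ

/-- The `i`-th vertex of a path from `a` to `b` whose internal vertices are
`w 0, …, w (t-1)` (so the path has length `t + 1`). -/
def chainVertex {α : Type*} (a b : α) {t : ℕ} (w : Fin t → α) (i : Fin (t + 2)) : α :=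
  if _h0 : (i : ℕ) = 0 then a
  else if _h1 : (i : ℕ) = t + 1 then b
  else w ⟨(i : ℕ) - 1, by have := i.isLt; omega⟩

/-- The edge set of a path from `a` to `b` through the internal vertices
`w 0, …, w (t-1)`. -/
def chainEdges {α : Type*} (a b : α) {t : ℕ} (w : Fin t → α) : Set (Sym2 α) :=
  {e | ∃ i : Fin (t + 1),
    e = s(chainVertex a b w (Fin.castSucc i), chainVertex a b w (Fin.succ i))}

/-- Path-addition `G ⊕ P ⊕ F`: the graph on `V ⊕ Fin t` obtained from `G` by adding an
internally vertex-disjoint path `P = (u, w₁, …, w_t, v)` with `t` new internal vertices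
together with a set `F` of supplementary edges. -/
def pathAdd {V : Type*} (G : SimpleGraph V) (u v : V) (t : ℕ)
    (F : Set (Sym2 (V ⊕ Fin t))) : SimpleGraph (V ⊕ Fin t) :=
  SimpleGraph.fromEdgeSet
    ((Sym2.map Sum.inl '' G.edgeSet)
      ∪ chainEdges (Sum.inl u) (Sum.inl v) (fun i => Sum.inr i)
      ∪ F)

/-- A valid supplementary edge set: every supplementary edge is a non-loop with at least
one endpoint among the internal vertices `w₁, …, w_t` of the added path. -/
def ValidSupp {V : Type*} {t : ℕ} (F : Set (Sym2 (V ⊕ Fin t))) : Prop :=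
  ∀ e ∈ F, ¬ e.IsDiag ∧ ∃ i : Fin t, Sum.inr i ∈ e

/-- An isomorphism-closed class of finite simple graphs. -/
def IsoClosed (𝒢 : ∀ V : Type, Fintype V → SimpleGraph V → Prop) : Prop :=
  ∀ (V W : Type) [iV : Fintype V] [iW : Fintype W]
    (G : SimpleGraph V) (H : SimpleGraph W),
    Nonempty (G ≃g H) → 𝒢 V iV G → 𝒢 W iW H

/-- A class of finite simple graphs is closed under path-addition if for every member
`G`, all distinct vertices `u, v` of `G`, and every internally vertex-disjoint path with
new internal vertices of length at least `|V(G)| - 1`, there is a supplementary edge set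
`F` such that `G ⊕ P ⊕ F` belongs to the class. -/
def ClosedUnderPathAddition (𝒢 : ∀ V : Type, Fintype V → SimpleGraph V → Prop) : Prop :=
  ∀ (V : Type) [iV : Fintype V] (G : SimpleGraph V), 𝒢 V iV G →
    ∀ u v : V, u ≠ v → ∀ t : ℕ, Fintype.card V - 1 ≤ t + 1 →
      ∃ F : Set (Sym2 (V ⊕ Fin t)), ValidSupp F ∧
        𝒢 (V ⊕ Fin t) inferInstance (pathAdd G u v t F)

/-- `H` is a minor of `G`: there is a family of nonempty pairwise disjoint branch sets in
`V(G)`, each inducing a connected subgraph of `G`, such that every edge of `H` is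
realized by an edge of `G` between the corresponding branch sets. -/
def IsMinorOf {W V : Type*} (H : SimpleGraph W) (G : SimpleGraph V) : Prop :=
  ∃ B : W → Set V,
    (∀ h : W, (B h).Nonempty) ∧
    (Pairwise fun h h' : W => Disjoint (B h) (B h')) ∧
    (∀ h : W, (G.induce (B h)).Connected) ∧
    (∀ h h' : W, H.Adj h h' → ∃ x ∈ B h, ∃ y ∈ B h', G.Adj x y)

/-- A class of finite simple graphs is minor-closed if it contains every minor of each of
its members. -/
def MinorClosed (𝒢 : ∀ V : Type, Fintype V → SimpleGraph V → Prop) : Prop :=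
  ∀ (V W : Type) [iV : Fintype V] [iW : Fintype W]
    (G : SimpleGraph V) (H : SimpleGraph W),
    𝒢 V iV G → IsMinorOf H G → 𝒢 W iW H


open SimpleGraph

section Helpers

variable {V : Type}

private lemma induce_singleton_connected (G : SimpleGraph V) (x : V) :
    (G.induce {x}).Connected := by
  rw [SimpleGraph.connected_iff]
  refine ⟨fun a b => ?_, ⟨⟨x, rfl⟩⟩⟩
  have : a = b := Subtype.ext (by simpa using a.2.trans (Set.mem_singleton_iff.mp b.2).symm)
  rw [this]

private lemma isMinorOf_of_le {G G' : SimpleGraph V} (h : G ≤ G') : IsMinorOf G G' := by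
  refine ⟨fun x => {x}, fun x => ⟨x, rfl⟩, fun x y hxy => Set.disjoint_singleton.mpr hxy,
    fun x => induce_singleton_connected G' x, fun x y hadj => ⟨x, rfl, y, rfl, h hadj⟩⟩

private lemma pathAdd_mono (G : SimpleGraph V) (u v : V) (t : ℕ)
    (F : Set (Sym2 (V ⊕ Fin t))) : pathAdd G u v t ∅ ≤ pathAdd G u v t F :=
  SimpleGraph.fromEdgeSet_mono (Set.union_subset_union_right _ (Set.empty_subset F))

private lemma pathAdd_adj_inl {G : SimpleGraph V} {x y : V} (u v : V) (t : ℕ)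
    (F : Set (Sym2 (V ⊕ Fin t))) (h : G.Adj x y) :
    (pathAdd G u v t F).Adj (Sum.inl x) (Sum.inl y) := by
  rw [pathAdd, SimpleGraph.fromEdgeSet_adj]
  exact ⟨Or.inl (Or.inl ⟨s(x, y), h, rfl⟩), by simp [h.ne]⟩

private lemma chainVertex_zero {α : Type*} (a b : α) {t : ℕ} (w : Fin t → α)
    (i : Fin (t + 2)) (h : (i : ℕ) = 0) : chainVertex a b w i = a := dif_pos h

private lemma chainVertex_last {α : Type*} (a b : α) {t : ℕ} (w : Fin t → α)
    (i : Fin (t + 2)) (h0 : (i : ℕ) ≠ 0) (h : (i : ℕ) = t + 1) : chainVertex a b w i = b := by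
  rw [chainVertex, dif_neg h0, dif_pos h]

private lemma chainVertex_mid {α : Type*} (a b : α) {t : ℕ} (w : Fin t → α)
    (i : Fin (t + 2)) (h0 : (i : ℕ) ≠ 0) (h1 : (i : ℕ) ≠ t + 1) :
    chainVertex a b w i = w ⟨(i : ℕ) - 1, by have := i.isLt; omega⟩ := by
  rw [chainVertex, dif_neg h0, dif_neg h1]

private lemma chain_edge_mem {α : Type*} (a b : α) {t : ℕ} (w : Fin t → α)
    (j : ℕ) (hj : j < t + 1) :
    s(chainVertex a b w ⟨j, by omega⟩, chainVertex a b w ⟨j + 1, by omega⟩)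
      ∈ chainEdges a b w :=
  ⟨⟨j, hj⟩, by rw [Fin.castSucc_mk, Fin.succ_mk]⟩

private lemma pathAdd_adj_first (G : SimpleGraph V) (u v : V) {t : ℕ} (ht : 1 ≤ t)
    (F : Set (Sym2 (V ⊕ Fin t))) :
    (pathAdd G u v t F).Adj (Sum.inl u) (Sum.inr ⟨0, ht⟩) := by
  rw [pathAdd, SimpleGraph.fromEdgeSet_adj]
  refine ⟨Or.inl (Or.inr ?_), by simp⟩
  have h := chain_edge_mem (Sum.inl u) (Sum.inl v) (fun i => (Sum.inr i : V ⊕ Fin t))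
    0 (by omega)
  rw [chainVertex_zero _ _ _ _ rfl,
    chainVertex_mid _ _ _ _ (show (1 : ℕ) ≠ 0 by omega) (show (1 : ℕ) ≠ t + 1 by omega)] at h
  exact h

private lemma pathAdd_adj_mid (G : SimpleGraph V) (u v : V) {t : ℕ}
    (F : Set (Sym2 (V ⊕ Fin t))) (j : ℕ) (hj : j + 1 < t) :
    (pathAdd G u v t F).Adj (Sum.inr ⟨j, by omega⟩) (Sum.inr ⟨j + 1, hj⟩) := by
  rw [pathAdd, SimpleGraph.fromEdgeSet_adj]
  refine ⟨Or.inl (Or.inr ?_), by simp [Fin.ext_iff]⟩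
  have h := chain_edge_mem (Sum.inl u) (Sum.inl v) (fun i => (Sum.inr i : V ⊕ Fin t))
    (j + 1) (by omega)
  rw [chainVertex_mid _ _ _ _ (show j + 1 ≠ 0 by omega) (show j + 1 ≠ t + 1 by omega),
    chainVertex_mid _ _ _ _ (show j + 1 + 1 ≠ 0 by omega)
      (show j + 1 + 1 ≠ t + 1 by omega)] at h
  exact h

private lemma pathAdd_adj_last (G : SimpleGraph V) (u v : V) {t : ℕ} (ht : 1 ≤ t)
    (F : Set (Sym2 (V ⊕ Fin t))) :
    (pathAdd G u v t F).Adj (Sum.inr ⟨t - 1, by omega⟩) (Sum.inl v) := by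
  rw [pathAdd, SimpleGraph.fromEdgeSet_adj]
  refine ⟨Or.inl (Or.inr ?_), by simp⟩
  have h := chain_edge_mem (Sum.inl u) (Sum.inl v) (fun i => (Sum.inr i : V ⊕ Fin t))
    t (by omega)
  rw [chainVertex_mid _ _ _ _ (show t ≠ 0 by omega) (show t ≠ t + 1 by omega),
    chainVertex_last _ _ _ _ (show t + 1 ≠ 0 by omega) rfl] at h
  exact h

end Helpers

section Helpers2

variable {V : Type}

private lemma induce_image_inl_connected {G : SimpleGraph V} {S : Set V} (u v : V) (t : ℕ)
    (F : Set (Sym2 (V ⊕ Fin t))) (hS : (G.induce S).Connected) :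
    ((pathAdd G u v t F).induce (Sum.inl '' S)).Connected := by
  refine hS.map ⟨fun p => ⟨Sum.inl p.1, ⟨p.1, p.2, rfl⟩⟩, fun hab => ?_⟩ ?_
  · exact pathAdd_adj_inl u v t F hab
  · rintro ⟨w, x, hx, rfl⟩
    exact ⟨⟨x, hx⟩, rfl⟩

private lemma induce_union_connected_of_adj {G : SimpleGraph V} {S T : Set V}
    (hS : (G.induce S).Connected) (hT : (G.induce T).Connected)
    {x y : V} (hx : x ∈ S) (hy : y ∈ T) (hxy : G.Adj x y) :
    (G.induce (S ∪ T)).Connected := by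
  have h1 : (G.induce (S ∪ {x, y})).Connected :=
    SimpleGraph.induce_union_connected hS.preconnected (SimpleGraph.induce_pair_connected_of_adj hxy).preconnected
      ⟨x, hx, by simp⟩
  have h2 : (G.induce ((S ∪ {x, y}) ∪ T)).Connected :=
    SimpleGraph.induce_union_connected h1.preconnected hT.preconnected ⟨y, Or.inr (by simp), hy⟩
  have hset : (S ∪ {x, y}) ∪ T = S ∪ T := by
    ext z
    simp only [Set.mem_union, Set.mem_insert_iff, Set.mem_singleton_iff]
    constructor
    · rintro ((h | rfl | rfl) | h) <;> tauto
    · tauto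
  rwa [hset] at h2

private lemma induce_range_inr_connected (G : SimpleGraph V) (u v : V) {t : ℕ}
    (ht : 1 ≤ t) (F : Set (Sym2 (V ⊕ Fin t))) :
    ((pathAdd G u v t F).induce (Set.range (Sum.inr : Fin t → V ⊕ Fin t))).Connected := by
  rw [SimpleGraph.connected_iff]
  have key : ∀ j : ℕ, ∀ hj : j < t,
      ((pathAdd G u v t F).induce (Set.range (Sum.inr : Fin t → V ⊕ Fin t))).Reachable
        ⟨Sum.inr ⟨j, hj⟩, ⟨_, rfl⟩⟩ ⟨Sum.inr ⟨0, ht⟩, ⟨_, rfl⟩⟩ := by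
    intro j
    induction j with
    | zero => intro hj; exact SimpleGraph.Reachable.refl _
    | succ m ih =>
      intro hj
      have hadj : ((pathAdd G u v t F).induce
          (Set.range (Sum.inr : Fin t → V ⊕ Fin t))).Adj
          ⟨Sum.inr ⟨m + 1, hj⟩, ⟨_, rfl⟩⟩ ⟨Sum.inr ⟨m, by omega⟩, ⟨_, rfl⟩⟩ :=
        (pathAdd_adj_mid G u v F m hj).symm
      exact hadj.reachable.trans (ih (by omega))
  refine ⟨?_, ⟨⟨Sum.inr ⟨0, ht⟩, ⟨_, rfl⟩⟩⟩⟩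
  rintro ⟨_, ja, rfl⟩ ⟨_, jb, rfl⟩
  exact (key ja.1 ja.isLt).trans (key jb.1 jb.isLt).symm

private lemma mem_pathAdd_empty (𝒢 : ∀ V : Type, Fintype V → SimpleGraph V → Prop)
    (hminor : MinorClosed 𝒢) (hpa : ClosedUnderPathAddition 𝒢)
    {V : Type} [iV : Fintype V] {G : SimpleGraph V} (hG : 𝒢 V iV G) {u v : V} (huv : u ≠ v)
    (t : ℕ) (ht : Fintype.card V - 1 ≤ t + 1) :
    𝒢 (V ⊕ Fin t) inferInstance (pathAdd G u v t ∅) := by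
  obtain ⟨F, _, hmem⟩ := hpa V G hG u v huv t ht
  exact hminor _ _ _ _ hmem (isMinorOf_of_le (pathAdd_mono G u v t F))

end Helpers2

/-- The inductive invariant: a member of `𝒢` containing a `K_n`-minor model `B` together
with an extra connected branch set `C`, disjoint from all `B i`, already joined by an
edge to `B i` for all `i < k`. -/
private def Model (𝒢 : ∀ V : Type, Fintype V → SimpleGraph V → Prop) (n k : ℕ) : Prop :=
  ∃ (V : Type) (iV : Fintype V) (G : SimpleGraph V) (B : Fin n → Set V) (C : Set V),
    𝒢 V iV G ∧ (∃ a b : V, a ≠ b) ∧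
    (∀ i, (B i).Nonempty) ∧
    (Pairwise fun i j => Disjoint (B i) (B j)) ∧
    (∀ i, (G.induce (B i)).Connected) ∧
    (∀ i j, i ≠ j → ∃ x ∈ B i, ∃ y ∈ B j, G.Adj x y) ∧
    C.Nonempty ∧ (∀ i, Disjoint C (B i)) ∧ (G.induce C).Connected ∧
    (∀ i : Fin n, (i : ℕ) < k → ∃ x ∈ C, ∃ y ∈ B i, G.Adj x y)

private lemma model_step (𝒢 : ∀ V : Type, Fintype V → SimpleGraph V → Prop)
    (hminor : MinorClosed 𝒢) (hpa : ClosedUnderPathAddition 𝒢) {n k : ℕ} (hk : k < n)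
    (h : Model 𝒢 n k) : Model 𝒢 n (k + 1) := by
  obtain ⟨V, iV, G, B, C, hG, ⟨a, b, hab⟩, hBne, hBdisj, hBconn, hBadj, hCne, hCdisj,
    hCconn, hCadj⟩ := h
  letI := iV
  obtain ⟨u, hu⟩ := hCne
  obtain ⟨v, hv⟩ := hBne ⟨k, hk⟩
  have huv : u ≠ v := fun e => Set.disjoint_left.mp (hCdisj ⟨k, hk⟩) hu (e ▸ hv)
  set t := Fintype.card V with htdef
  have ht1 : 1 ≤ t := Fintype.card_pos_iff.mpr ⟨a⟩
  have hG' := mem_pathAdd_empty 𝒢 hminor hpa hG huv t (by omega)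
  have hdisjLR : ∀ S : Set V,
      Disjoint (Set.range (Sum.inr : Fin t → V ⊕ Fin t)) (Sum.inl '' S) := by
    intro S
    rw [Set.disjoint_left]
    rintro _ ⟨j, rfl⟩ ⟨x, hx, hj⟩
    exact Sum.inl_ne_inr hj
  refine ⟨V ⊕ Fin t, inferInstance, pathAdd G u v t ∅, fun i => Sum.inl '' B i,
    Sum.inl '' C ∪ Set.range Sum.inr, hG', ⟨Sum.inl a, Sum.inl b, by simp [hab]⟩,
    fun i => (hBne i).image _,
    fun i j hij => Set.disjoint_image_of_injective Sum.inl_injective (hBdisj hij),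
    fun i => induce_image_inl_connected u v t ∅ (hBconn i), ?_, ?_, ?_, ?_, ?_⟩
  · intro i j hij
    obtain ⟨x, hx, y, hy, hadj⟩ := hBadj i j hij
    exact ⟨Sum.inl x, ⟨x, hx, rfl⟩, Sum.inl y, ⟨y, hy, rfl⟩, pathAdd_adj_inl u v t ∅ hadj⟩
  · exact ⟨Sum.inl u, Or.inl ⟨u, hu, rfl⟩⟩
  · intro i
    rw [Set.disjoint_union_left]
    exact ⟨Set.disjoint_image_of_injective Sum.inl_injective (hCdisj i), hdisjLR (B i)⟩
  · exact induce_union_connected_of_adj (induce_image_inl_connected u v t ∅ hCconn)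
      (induce_range_inr_connected G u v ht1 ∅) ⟨u, hu, rfl⟩ ⟨⟨0, ht1⟩, rfl⟩
      (pathAdd_adj_first G u v ht1 ∅)
  · intro i hik
    by_cases hik' : (i : ℕ) < k
    · obtain ⟨x, hx, y, hy, hadj⟩ := hCadj i hik'
      exact ⟨Sum.inl x, Or.inl ⟨x, hx, rfl⟩, Sum.inl y, ⟨y, hy, rfl⟩,
        pathAdd_adj_inl u v t ∅ hadj⟩
    · have hi : i = ⟨k, hk⟩ := Fin.ext (show (i : ℕ) = k by omega)
      subst hi
      exact ⟨Sum.inr ⟨t - 1, by omega⟩, Or.inr ⟨_, rfl⟩, Sum.inl v, ⟨v, hv, rfl⟩,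
        pathAdd_adj_last G u v ht1 ∅⟩

private lemma model_succ (𝒢 : ∀ V : Type, Fintype V → SimpleGraph V → Prop)
    (hminor : MinorClosed 𝒢) (hpa : ClosedUnderPathAddition 𝒢) {n : ℕ}
    (h : Model 𝒢 n n) : Model 𝒢 (n + 1) 0 := by
  obtain ⟨V, iV, G, B, C, hG, ⟨a, b, hab⟩, hBne, hBdisj, hBconn, hBadj, hCne, hCdisj,
    hCconn, hCadj⟩ := h
  letI := iV
  obtain ⟨u, hu⟩ := hCne
  obtain ⟨v, huv⟩ : ∃ v, u ≠ v := by
    rcases eq_or_ne u a with rfl | hne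
    · exact ⟨b, hab⟩
    · exact ⟨a, hne⟩
  set t := Fintype.card V with htdef
  have ht1 : 1 ≤ t := Fintype.card_pos_iff.mpr ⟨a⟩
  have hG' := mem_pathAdd_empty 𝒢 hminor hpa hG huv t (by omega)
  have hdisjLR : ∀ S : Set V,
      Disjoint (Set.range (Sum.inr : Fin t → V ⊕ Fin t)) (Sum.inl '' S) := by
    intro S
    rw [Set.disjoint_left]
    rintro _ ⟨j, rfl⟩ ⟨x, hx, hj⟩
    exact Sum.inl_ne_inr hj
  refine ⟨V ⊕ Fin t, inferInstance, pathAdd G u v t ∅,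
    fun i => if hi : (i : ℕ) < n then Sum.inl '' B ⟨(i : ℕ), hi⟩ else Sum.inl '' C,
    Set.range Sum.inr, hG', ⟨Sum.inl a, Sum.inl b, by simp [hab]⟩, ?_, ?_, ?_, ?_,
    ⟨Sum.inr ⟨0, ht1⟩, ⟨_, rfl⟩⟩, ?_, induce_range_inr_connected G u v ht1 ∅,
    fun i hi => absurd hi (by omega)⟩
  · intro i
    dsimp only
    split
    · exact (hBne _).image _
    · exact ⟨Sum.inl u, u, hu, rfl⟩
  · intro i j hij
    dsimp only
    split_ifs with h1 h2 h3
    · exact Set.disjoint_image_of_injective Sum.inl_injective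
        (hBdisj (by intro e; rw [Fin.mk.injEq] at e; exact hij (Fin.ext e)))
    · exact Set.disjoint_image_of_injective Sum.inl_injective ((hCdisj ⟨(i : ℕ), h1⟩).symm)
    · exact Set.disjoint_image_of_injective Sum.inl_injective (hCdisj ⟨(j : ℕ), h3⟩)
    · exact absurd (Fin.ext (show (i : ℕ) = (j : ℕ) by omega)) hij
  · intro i
    dsimp only
    by_cases hi : (i : ℕ) < n
    · rw [dif_pos hi]
      exact induce_image_inl_connected u v t ∅ (hBconn _)
    · rw [dif_neg hi]
      exact induce_image_inl_connected u v t ∅ hCconn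
  · intro i j hij
    dsimp only
    split_ifs with h1 h2 h3
    · obtain ⟨x, hx, y, hy, hadj⟩ :=
        hBadj ⟨(i : ℕ), h1⟩ ⟨(j : ℕ), h2⟩ (by intro e; rw [Fin.mk.injEq] at e; exact hij (Fin.ext e))
      exact ⟨Sum.inl x, ⟨x, hx, rfl⟩, Sum.inl y, ⟨y, hy, rfl⟩, pathAdd_adj_inl u v t ∅ hadj⟩
    · obtain ⟨x, hx, y, hy, hadj⟩ := hCadj ⟨(i : ℕ), h1⟩ h1
      exact ⟨Sum.inl y, ⟨y, hy, rfl⟩, Sum.inl x, ⟨x, hx, rfl⟩,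
        pathAdd_adj_inl u v t ∅ hadj.symm⟩
    · obtain ⟨x, hx, y, hy, hadj⟩ := hCadj ⟨(j : ℕ), h3⟩ h3
      exact ⟨Sum.inl x, ⟨x, hx, rfl⟩, Sum.inl y, ⟨y, hy, rfl⟩, pathAdd_adj_inl u v t ∅ hadj⟩
    · exact absurd (Fin.ext (show (i : ℕ) = (j : ℕ) by omega)) hij
  · intro i
    dsimp only
    split
    · exact hdisjLR _
    · exact hdisjLR _

private lemma model_zero (𝒢 : ∀ V : Type, Fintype V → SimpleGraph V → Prop)
    (hne : ∃ (V : Type) (iV : Fintype V) (G : SimpleGraph V),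
      𝒢 V iV G ∧ 2 ≤ @Fintype.card V iV) : Model 𝒢 0 0 := by
  obtain ⟨V, iV, G, hG, hcard⟩ := hne
  letI := iV
  obtain ⟨a, b, hab⟩ := Fintype.exists_pair_of_one_lt_card (α := V) (show 1 < Fintype.card V by omega)
  exact ⟨V, iV, G, fun i => i.elim0, {a}, hG, ⟨a, b, hab⟩, fun i => i.elim0,
    by intro i; exact i.elim0, fun i => i.elim0, fun i => i.elim0, ⟨a, rfl⟩,
    fun i => i.elim0, induce_singleton_connected G a, fun i => i.elim0⟩

private lemma model_all (𝒢 : ∀ V : Type, Fintype V → SimpleGraph V → Prop)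
    (hminor : MinorClosed 𝒢) (hpa : ClosedUnderPathAddition 𝒢)
    (hne : ∃ (V : Type) (iV : Fintype V) (G : SimpleGraph V),
      𝒢 V iV G ∧ 2 ≤ @Fintype.card V iV) : ∀ n, Model 𝒢 n n := by
  have hup : ∀ n k, k ≤ n → Model 𝒢 n 0 → Model 𝒢 n k := by
    intro n k
    induction k with
    | zero => exact fun _ h => h
    | succ m ih => exact fun hm h => model_step 𝒢 hminor hpa hm (ih (by omega) h)
  intro n
  induction n with
  | zero => exact model_zero 𝒢 hne
  | succ m ih => exact hup (m + 1) (m + 1) le_rfl (model_succ 𝒢 hminor hpa ih)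

/-- An isomorphism-closed class of finite simple graphs that is closed
under taking minors, closed under path-addition, and contains a graph with at least two
vertices contains every finite simple graph. -/
theorem minorClosed_pathAdditionClosed_is_trivial
    (𝒢 : ∀ V : Type, Fintype V → SimpleGraph V → Prop)
    (hiso : IsoClosed 𝒢) (hminor : MinorClosed 𝒢) (hpa : ClosedUnderPathAddition 𝒢)
    (hne : ∃ (V : Type) (iV : Fintype V) (G : SimpleGraph V),
      𝒢 V iV G ∧ 2 ≤ @Fintype.card V iV) :
    ∀ (W : Type) [iW : Fintype W] (H : SimpleGraph W), 𝒢 W iW H := by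
  intro W iW H
  obtain ⟨V, iV, G, B, C, hG, _, hBne, hBdisj, hBconn, hBadj, _⟩ :=
    model_all 𝒢 hminor hpa hne (Fintype.card W)
  refine @hminor V W iV iW G H hG
    ⟨fun w => B (Fintype.equivFin W w), fun w => hBne _, ?_, fun w => hBconn _, ?_⟩
  · intro w w' hww
    exact hBdisj fun e => hww ((Fintype.equivFin W).injective e)
  · intro h h' hadj
    exact hBadj _ _ (fun e => hadj.ne ((Fintype.equivFin W).injective e))
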